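/- Property [C] holds for the general Fighter problem: for every u ∈ [0,1], every n ≥ 1 and every t ≥ 0, K(n+1,t) ≤ K(n,t) + 1; equivalently, n − K(n,t) is non-decreasing in n for each fixed t. -/

import Mathlib

open Real MeasureTheory Filter Topology

/-- Auxiliary history-based recursion: `Nhist a u n m t` equals `N(m,t)` when `m ≤ n`. -/
noncomputable def Nhist (a : ℕ → ℝ) (u : ℝ) : ℕ → ℕ → ℝ → ℝ
  | 0, _, _ => 0
  | n + 1, m, t =>
      if m ≤ n then Nhist a u n m t
      else (Finset.Icc 1 (n + 1)).sup'
          (Finset.nonempty_Icc.mpr (Nat.succ_le_succ (Nat.zero_le n)))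
          (fun j => a j + (a j * (1 - u) + u) *
            (Real.exp (-t) * ∫ x in (0:ℝ)..t, Nhist a u n (n + 1 - j) x * Real.exp x))

/-- `Nval a u n t` is `N(n,t)`, the optimal expected number of enemy planes shot down,
with `N(0,t) = 0` and `N(n,t) = max_{1 ≤ j ≤ n} N_n(j,t)`. -/
noncomputable def Nval (a : ℕ → ℝ) (u : ℝ) (n : ℕ) (t : ℝ) : ℝ :=
  Nhist a u n n t

/-- `Nstar a u r t` is `N*(r,t) = e^{-t} ∫_0^t N(r,x) e^x dx` (so `N*(0,t) = 0`). -/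
noncomputable def Nstar (a : ℕ → ℝ) (u : ℝ) (r : ℕ) (t : ℝ) : ℝ :=
  Real.exp (-t) * ∫ x in (0:ℝ)..t, Nval a u r x * Real.exp x

/-- `Nalloc a u n j t` is `N_n(j,t) = a(j) + c(j)·N*(n-j,t)` where `c(j) = a(j)(1-u)+u`. -/
noncomputable def Nalloc (a : ℕ → ℝ) (u : ℝ) (n j : ℕ) (t : ℝ) : ℝ :=
  a j + (a j * (1 - u) + u) * Nstar a u (n - j) t

/-- `Kopt a u n t = min { j ∈ {1,…,n} : N_n(j,t) = N(n,t) }`. -/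
noncomputable def Kopt (a : ℕ → ℝ) (u : ℝ) (n : ℕ) (t : ℝ) : ℕ :=
  sInf {j : ℕ | 1 ≤ j ∧ j ≤ n ∧ Nalloc a u n j t = Nval a u n t}

lemma Nhist_stable (a : ℕ → ℝ) (u : ℝ) :
    ∀ n m t, m ≤ n → Nhist a u n m t = Nval a u m t := by
  intro n
  induction n with
  | zero =>
    intro m t hm
    obtain rfl : m = 0 := Nat.le_zero.mp hm
    rfl
  | succ n ih =>
    intro m t hm
    by_cases h : m ≤ n
    · rw [Nhist, if_pos h, ih m t h]
    · obtain rfl : m = n + 1 := by omega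
      rfl

lemma Nval_succ (a : ℕ → ℝ) (u : ℝ) (n : ℕ) (t : ℝ) :
    Nval a u (n + 1) t = (Finset.Icc 1 (n + 1)).sup'
      (Finset.nonempty_Icc.mpr (Nat.succ_le_succ (Nat.zero_le n)))
      (fun j => Nalloc a u (n + 1) j t) := by
  show Nhist a u (n + 1) (n + 1) t = _
  rw [Nhist, if_neg (Nat.not_succ_le_self n)]
  apply Finset.sup'_congr _ rfl
  intro j hj
  obtain ⟨hj1, hj2⟩ := Finset.mem_Icc.mp hj
  have hsub : n + 1 - j ≤ n := Nat.lt_succ_iff.mp (Nat.sub_lt (Nat.succ_pos n) hj1)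
  have hfun : (fun x => Nhist a u n (n + 1 - j) x * Real.exp x)
      = fun x => Nval a u (n + 1 - j) x * Real.exp x := by
    funext x; rw [Nhist_stable a u n _ x hsub]
  rw [Nalloc, Nstar, hfun]

lemma Nval_continuous (a : ℕ → ℝ) (u : ℝ) : ∀ n, Continuous (fun t => Nval a u n t) := by
  intro n
  induction n using Nat.strong_induction_on with
  | _ n ih =>
    match n with
    | 0 => exact continuous_const (y := (0:ℝ))
    | m + 1 =>
      have : (fun t => Nval a u (m + 1) t) = fun t =>
          (Finset.Icc 1 (m + 1)).sup'
            (Finset.nonempty_Icc.mpr (Nat.succ_le_succ (Nat.zero_le m)))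
            (fun j => Nalloc a u (m + 1) j t) := funext (Nval_succ a u m)
      rw [this]
      apply Continuous.finset_sup'_apply
      intro j hj
      obtain ⟨hj1, hj2⟩ := Finset.mem_Icc.mp hj
      have hlt : m + 1 - j < m + 1 := Nat.sub_lt (Nat.succ_pos m) hj1
      have hP : Continuous fun t => ∫ x in (0:ℝ)..t, Nval a u (m + 1 - j) x * Real.exp x :=
        intervalIntegral.continuous_primitive
          (fun A B => ((ih _ hlt).mul Real.continuous_exp).intervalIntegrable A B) 0
      unfold Nalloc Nstar
      exact continuous_const.add (continuous_const.mul
        ((Real.continuous_exp.comp continuous_neg).mul hP))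

lemma c_nonneg {a : ℕ → ℝ} {u : ℝ} (haI : ∀ j, a j ∈ Set.Icc (0:ℝ) 1)
    (hu : u ∈ Set.Icc (0:ℝ) 1) (j : ℕ) : 0 ≤ a j * (1 - u) + u := by
  have h1 := (haI j).1
  have h2 := hu.1; have h3 := hu.2
  nlinarith

lemma Nval_nonneg {a : ℕ → ℝ} {u : ℝ} (haI : ∀ j, a j ∈ Set.Icc (0:ℝ) 1)
    (hu : u ∈ Set.Icc (0:ℝ) 1) :
    ∀ n t, 0 ≤ t → 0 ≤ Nval a u n t := by
  intro n
  induction n with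
  | zero => intro t _; exact le_of_eq rfl
  | succ n ih =>
    intro t ht
    have h1 : 0 ≤ Nstar a u n t := by
      apply mul_nonneg (Real.exp_nonneg _)
      apply intervalIntegral.integral_nonneg ht
      intro x hx
      exact mul_nonneg (ih x hx.1) (Real.exp_nonneg _)
    have h2 : Nalloc a u (n + 1) 1 t ≤ Nval a u (n + 1) t := by
      rw [Nval_succ]
      exact Finset.le_sup' (fun j => Nalloc a u (n + 1) j t)
        (Finset.mem_Icc.mpr ⟨le_refl 1, Nat.succ_le_succ (Nat.zero_le n)⟩)
    have h3 : 0 ≤ Nalloc a u (n + 1) 1 t := by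
      unfold Nalloc
      have h11 : n + 1 - 1 = n := by omega
      rw [h11]
      exact add_nonneg (haI 1).1 (mul_nonneg (c_nonneg haI hu 1) h1)
    linarith

lemma Nstar_succ_le {a : ℕ → ℝ} {u : ℝ} {r : ℕ} {t : ℝ} (ht : 0 ≤ t)
    (h : ∀ x, 0 ≤ x → Nval a u r x ≤ Nval a u (r + 1) x) :
    Nstar a u r t ≤ Nstar a u (r + 1) t := by
  unfold Nstar
  apply mul_le_mul_of_nonneg_left _ (Real.exp_nonneg _)
  apply intervalIntegral.integral_mono_on ht
    (((Nval_continuous a u r).mul Real.continuous_exp).intervalIntegrable 0 t)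
    (((Nval_continuous a u (r + 1)).mul Real.continuous_exp).intervalIntegrable 0 t)
  intro x hx
  exact mul_le_mul_of_nonneg_right (h x hx.1) (Real.exp_nonneg _)

lemma Nval_mono {a : ℕ → ℝ} {u : ℝ} (haI : ∀ j, a j ∈ Set.Icc (0:ℝ) 1)
    (hu : u ∈ Set.Icc (0:ℝ) 1) :
    ∀ n t, 0 ≤ t → Nval a u n t ≤ Nval a u (n + 1) t := by
  intro n
  induction n using Nat.strong_induction_on with
  | _ n ih =>
    match n with
    | 0 =>
      intro t ht
      have h0 : Nval a u 0 t = 0 := rfl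
      rw [h0]
      exact Nval_nonneg haI hu 1 t ht
    | m + 1 =>
      intro t ht
      obtain ⟨j, hj, hsup⟩ := Finset.exists_mem_eq_sup'
        (Finset.nonempty_Icc.mpr (Nat.succ_le_succ (Nat.zero_le m)))
        (fun j => Nalloc a u (m + 1) j t)
      obtain ⟨hj1, hj2⟩ := Finset.mem_Icc.mp hj
      have hval : Nval a u (m + 1) t = Nalloc a u (m + 1) j t := by
        rw [Nval_succ]; exact hsup
      have hle : Nalloc a u (m + 2) j t ≤ Nval a u (m + 2) t := by
        rw [Nval_succ]
        exact Finset.le_sup' (fun j => Nalloc a u (m + 2) j t)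
          (Finset.mem_Icc.mpr ⟨hj1, hj2.trans (Nat.le_succ _)⟩)
      have hstep : Nalloc a u (m + 1) j t ≤ Nalloc a u (m + 2) j t := by
        unfold Nalloc
        have hs : m + 2 - j = (m + 1 - j) + 1 := by omega
        rw [hs]
        have hNs : Nstar a u (m + 1 - j) t ≤ Nstar a u ((m + 1 - j) + 1) t := by
          apply Nstar_succ_le ht
          intro x hx
          exact ih (m + 1 - j) (Nat.sub_lt (Nat.succ_pos m) hj1) x hx
        exact add_le_add_right (mul_le_mul_of_nonneg_left hNs (c_nonneg haI hu j)) _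
      linarith

lemma Nstar_mono {a : ℕ → ℝ} {u : ℝ} (haI : ∀ j, a j ∈ Set.Icc (0:ℝ) 1)
    (hu : u ∈ Set.Icc (0:ℝ) 1) {r r' : ℕ} (hrr : r ≤ r') {t : ℝ} (ht : 0 ≤ t) :
    Nstar a u r t ≤ Nstar a u r' t := by
  have : Monotone fun r => Nstar a u r t :=
    monotone_nat_of_le_succ fun r => Nstar_succ_le ht (fun x hx => Nval_mono haI hu r x hx)
  exact this hrr

lemma Nstar_nonneg {a : ℕ → ℝ} {u : ℝ} (haI : ∀ j, a j ∈ Set.Icc (0:ℝ) 1)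
    (hu : u ∈ Set.Icc (0:ℝ) 1) (r : ℕ) {t : ℝ} (ht : 0 ≤ t) : 0 ≤ Nstar a u r t := by
  apply mul_nonneg (Real.exp_nonneg _)
  apply intervalIntegral.integral_nonneg ht
  intro x hx
  exact mul_nonneg (Nval_nonneg haI hu r x hx.1) (Real.exp_nonneg _)

lemma fighter_key {a : ℕ → ℝ} {u : ℝ} (haI : ∀ j, a j ∈ Set.Icc (0:ℝ) 1)
    (hmono : StrictMono a)
    (hconc : ∀ j : ℕ, a (j + 2) - a (j + 1) < a (j + 1) - a j)
    (hu : u ∈ Set.Icc (0:ℝ) 1)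
    (m k i : ℕ) (hki : k + 1 ≤ i) (hi : i ≤ m + 1) {t : ℝ} (ht : 0 ≤ t)
    (hopt : Nalloc a u (m + 1) i t ≤ Nalloc a u (m + 1) k t) :
    Nalloc a u (m + 2) (i + 1) t ≤ Nalloc a u (m + 2) (k + 1) t := by
  have e1 : m + 2 - (i + 1) = m + 1 - i := by omega
  have e2 : m + 2 - (k + 1) = m + 1 - k := by omega
  unfold Nalloc at hopt ⊢
  rw [e1, e2]
  have hS : Nstar a u (m + 1 - i) t ≤ Nstar a u (m + 1 - k) t :=
    Nstar_mono haI hu (by omega) ht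
  have hS2 : 0 ≤ Nstar a u (m + 1 - i) t := Nstar_nonneg haI hu _ ht
  have hanti : StrictAnti (fun j => a (j + 1) - a j) :=
    strictAnti_nat_of_succ_lt (fun j => hconc j)
  have hd : a (i + 1) - a i ≤ a (k + 1) - a k :=
    (hanti (show k < i by omega)).le
  have hdk : 0 ≤ a (k + 1) - a k := sub_nonneg.mpr (hmono (Nat.lt_succ_self k)).le
  have hdi : 0 ≤ a (i + 1) - a i := sub_nonneg.mpr (hmono (Nat.lt_succ_self i)).le
  have hu1 : 0 ≤ 1 - u := by linarith [hu.2]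
  have hfac : 1 + (1 - u) * Nstar a u (m + 1 - i) t
      ≤ 1 + (1 - u) * Nstar a u (m + 1 - k) t := by nlinarith
  have hfac2 : 0 ≤ 1 + (1 - u) * Nstar a u (m + 1 - i) t := by nlinarith
  have h2 : (a (i + 1) - a i) * (1 + (1 - u) * Nstar a u (m + 1 - i) t)
      ≤ (a (k + 1) - a k) * (1 + (1 - u) * Nstar a u (m + 1 - k) t) :=
    mul_le_mul hd hfac hfac2 hdk
  nlinarith [h2, hopt]


/-- Theorem 3.1 ([C]): for every `u ∈ [0,1]`, `n ≥ 1` and `t ≥ 0`,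
`K(n+1,t) ≤ K(n,t) + 1`. -/
theorem fighter_C
    (a : ℕ → ℝ) (haI : ∀ j, a j ∈ Set.Icc (0:ℝ) 1) (ha0 : a 0 = 0)
    (hmono : StrictMono a)
    (hconc : ∀ j : ℕ, a (j + 2) - a (j + 1) < a (j + 1) - a j)
    (u : ℝ) (hu : u ∈ Set.Icc (0:ℝ) 1) :
    ∀ n : ℕ, 1 ≤ n → ∀ t : ℝ, 0 ≤ t →
      Kopt a u (n + 1) t ≤ Kopt a u n t + 1 := by
  intro n hn t ht
  obtain ⟨m, rfl⟩ : ∃ m, n = m + 1 := ⟨n - 1, by omega⟩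
  obtain ⟨k0, hk0mem, hk0sup⟩ := Finset.exists_mem_eq_sup'
    (Finset.nonempty_Icc.mpr (Nat.succ_le_succ (Nat.zero_le m)))
    (fun j => Nalloc a u (m + 1) j t)
  obtain ⟨hk01, hk02⟩ := Finset.mem_Icc.mp hk0mem
  have hSne : {j : ℕ | 1 ≤ j ∧ j ≤ m + 1 ∧ Nalloc a u (m + 1) j t = Nval a u (m + 1) t}.Nonempty :=
    ⟨k0, hk01, hk02, by rw [Nval_succ]; exact hk0sup.symm⟩
  have hkmem : Kopt a u (m + 1) t ∈
      {j : ℕ | 1 ≤ j ∧ j ≤ m + 1 ∧ Nalloc a u (m + 1) j t = Nval a u (m + 1) t} :=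
    Nat.sInf_mem hSne
  obtain ⟨hk1, hk2, hk3⟩ := hkmem
  set k := Kopt a u (m + 1) t
  obtain ⟨j0, hj0mem, hj0sup⟩ := Finset.exists_mem_eq_sup'
    (Finset.nonempty_Icc.mpr (Nat.succ_le_succ (Nat.zero_le (m + 1))))
    (fun j => Nalloc a u (m + 1 + 1) j t)
  obtain ⟨hj01, hj02⟩ := Finset.mem_Icc.mp hj0mem
  have hj0val : Nalloc a u (m + 1 + 1) j0 t = Nval a u (m + 1 + 1) t := by
    rw [Nval_succ]; exact hj0sup.symm
  by_cases hcase : j0 ≤ k + 1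
  · exact le_trans (Nat.sInf_le ⟨hj01, hj02, hj0val⟩) hcase
  · push_neg at hcase
    obtain ⟨i, rfl⟩ : ∃ i, j0 = i + 1 := ⟨j0 - 1, by omega⟩
    have hopt : Nalloc a u (m + 1) i t ≤ Nalloc a u (m + 1) k t := by
      rw [hk3, Nval_succ]
      exact Finset.le_sup' (fun j => Nalloc a u (m + 1) j t)
        (Finset.mem_Icc.mpr ⟨by omega, by omega⟩)
    have hkey : Nalloc a u (m + 2) (i + 1) t ≤ Nalloc a u (m + 2) (k + 1) t :=
      fighter_key haI hmono hconc hu m k i (by omega) (by omega) ht hopt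
    have hub : Nalloc a u (m + 1 + 1) (k + 1) t ≤ Nval a u (m + 1 + 1) t := by
      rw [Nval_succ]
      exact Finset.le_sup' (fun j => Nalloc a u (m + 1 + 1) j t)
        (Finset.mem_Icc.mpr ⟨by omega, by omega⟩)
    have heq : Nalloc a u (m + 1 + 1) (k + 1) t = Nval a u (m + 1 + 1) t :=
      le_antisymm hub (by rw [← hj0val]; exact hkey)
    exact Nat.sInf_le ⟨by omega, by omega, heq⟩
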